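/- Fix 0 < μ < v̄. Let prices satisfy 0 < v₁ ≤ v₂ ≤ μ and let x₁ ∈ [0, 1], x₂ = 1 − x₁. Then the competitive ratio of the 2-level mechanism posting v₁ with probability x₁ and v₂ with probability x₂ over the mean ambiguity set, i.e., inf_{F ∈ 𝓕_mean} ( v₁x₁F([v₁, v̄]) + v₂x₂F([v₂, v̄]) ) / OPT(F), equals min{ (v₁x₁ + v₂x₂)/v̄, (μ − v₁)(v₁x₁ + v₂x₂)/(v₁(v̄ − v₁)), (μ − v₂)x₂/(v̄ − v₂) + v₁x₁/v₂ }. -/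

import Mathlib

open MeasureTheory Set ENNReal

noncomputable section

/-- Hindsight optimal revenue: `OPT(F) = sup_{p ∈ [0, v̄]} p · F([p, v̄])`. -/
def hindsightOpt (vbar : ℝ) (F : Measure ℝ) : ℝ :=
  ⨆ p : Icc (0 : ℝ) vbar, (p : ℝ) * (F (Icc (p : ℝ) vbar)).toReal

/-- The mean ambiguity set: probability measures on `[0, v̄]` with mean at least `μ`. -/
def Fmean (μ vbar : ℝ) : Set (Measure ℝ) :=
  {F | IsProbabilityMeasure F ∧ F (Icc (0 : ℝ) vbar) = 1 ∧ μ ≤ ∫ t, t ∂F}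

/-- Competitive ratio over the mean ambiguity set of the 2-level mechanism posting `v1` with
probability `x1` and `v2` with probability `1 - x1`. -/
def twoLevelCRmean (μ vbar v1 v2 x1 : ℝ) : ℝ :=
  ⨅ F : ↥(Fmean μ vbar),
    (v1 * x1 * (F.1 (Icc v1 vbar)).toReal + v2 * (1 - x1) * (F.1 (Icc v2 vbar)).toReal) /
      hindsightOpt vbar F.1

def tp (vbar q c : ℝ) : Measure ℝ :=
  ENNReal.ofReal q • Measure.dirac vbar + ENNReal.ofReal (1-q) • Measure.dirac c

lemma tp_apply (vbar q c : ℝ) (s : Set ℝ) (hs : MeasurableSet s) :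
    tp vbar q c s = ENNReal.ofReal q * s.indicator 1 vbar
      + ENNReal.ofReal (1-q) * s.indicator 1 c := by
  simp [tp, Measure.dirac_apply' _ hs]

lemma tp_apply_toReal (vbar q c : ℝ) (hq0 : 0 ≤ q) (hq1 : q ≤ 1) (s : Set ℝ)
    (hs : MeasurableSet s) :
    ((tp vbar q c) s).toReal = q * s.indicator 1 vbar + (1-q) * s.indicator 1 c := by
  rw [tp_apply _ _ _ _ hs]
  have h1 : ∀ x : ℝ, s.indicator (1 : ℝ → ℝ≥0∞) x ≠ ⊤ := by
    intro x; by_cases h : x ∈ s <;> simp [h]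
  rw [ENNReal.toReal_add (ENNReal.mul_ne_top ENNReal.ofReal_ne_top (h1 _))
    (ENNReal.mul_ne_top ENNReal.ofReal_ne_top (h1 _))]
  by_cases h1 : vbar ∈ s <;> by_cases h2 : c ∈ s <;>
    simp [indicator_of_mem, indicator_of_notMem, h1, h2, ENNReal.toReal_ofReal, hq0, hq1,
      sub_nonneg.mpr hq1]

lemma tp_prob (vbar q c : ℝ) (hq0 : 0 ≤ q) (hq1 : q ≤ 1) :
    IsProbabilityMeasure (tp vbar q c) := by
  constructor
  rw [tp_apply _ _ _ _ MeasurableSet.univ]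
  simp [← ENNReal.ofReal_add hq0 (sub_nonneg.mpr hq1)]

lemma tp_integral (vbar q c : ℝ) (hq0 : 0 ≤ q) (hq1 : q ≤ 1) :
    ∫ t, t ∂(tp vbar q c) = q * vbar + (1-q) * c := by
  rw [tp, integral_add_measure]
  · rw [integral_smul_measure, integral_smul_measure]
    simp [ENNReal.toReal_ofReal hq0, ENNReal.toReal_ofReal (sub_nonneg.mpr hq1), smul_eq_mul]
  · exact ((integrable_const vbar).congr (ae_eq_dirac id).symm).smul_measure ENNReal.ofReal_ne_top
  · exact ((integrable_const c).congr (ae_eq_dirac id).symm).smul_measure ENNReal.ofReal_ne_top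

lemma tp_tail_low (vbar q c : ℝ) (hq0 : 0 ≤ q) (hq1 : q ≤ 1) (p : ℝ)
    (hpc : p ≤ c) (hcv : c ≤ vbar) :
    ((tp vbar q c) (Icc p vbar)).toReal = 1 := by
  rw [tp_apply_toReal _ _ _ hq0 hq1 _ measurableSet_Icc]
  rw [indicator_of_mem (show vbar ∈ Icc p vbar from ⟨hpc.trans hcv, le_refl _⟩),
    indicator_of_mem (show c ∈ Icc p vbar from ⟨hpc, hcv⟩)]
  simp

lemma tp_tail_high (vbar q c : ℝ) (hq0 : 0 ≤ q) (hq1 : q ≤ 1) (p : ℝ)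
    (hpc : c < p) (hpv : p ≤ vbar) :
    ((tp vbar q c) (Icc p vbar)).toReal = q := by
  rw [tp_apply_toReal _ _ _ hq0 hq1 _ measurableSet_Icc]
  rw [indicator_of_mem (show vbar ∈ Icc p vbar from ⟨hpv, le_refl _⟩),
    indicator_of_notMem (show c ∉ Icc p vbar from fun h => absurd h.1 (not_le.mpr hpc))]
  simp

lemma tp_opt (vbar q c : ℝ) (hq0 : 0 ≤ q) (hq1 : q ≤ 1) (h0c : 0 ≤ c) (hcv : c < vbar) :
    hindsightOpt vbar (tp vbar q c) = max c (vbar * q) := by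
  have hne : Nonempty (Icc (0:ℝ) vbar) :=
    (Set.nonempty_Icc.mpr (h0c.trans hcv.le)).to_subtype
  have hub : ∀ p : Icc (0:ℝ) vbar,
      (p : ℝ) * ((tp vbar q c) (Icc (p : ℝ) vbar)).toReal ≤ max c (vbar * q) := by
    rintro ⟨p, hp0, hpv⟩
    rcases le_or_gt p c with h | h
    · rw [tp_tail_low _ _ _ hq0 hq1 _ h hcv.le]
      simpa using le_max_of_le_left h
    · rw [tp_tail_high _ _ _ hq0 hq1 _ h hpv]
      exact le_max_of_le_right (mul_le_mul hpv (le_refl q) hq0 (h0c.trans hcv.le))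
  apply le_antisymm (ciSup_le hub)
  apply max_le
  · have := le_ciSup ⟨max c (vbar*q), forall_mem_range.mpr hub⟩ (⟨c, h0c, hcv.le⟩ : Icc (0:ℝ) vbar)
    rwa [tp_tail_low _ _ _ hq0 hq1 _ (le_refl c) hcv.le, mul_one] at this
  · have := le_ciSup ⟨max c (vbar*q), forall_mem_range.mpr hub⟩
      (⟨vbar, h0c.trans hcv.le, le_refl _⟩ : Icc (0:ℝ) vbar)
    rwa [tp_tail_high _ _ _ hq0 hq1 _ hcv (le_refl _)] at this

lemma tp_mem_Fmean (μ vbar c : ℝ) (h0c : 0 ≤ c) (hcμ : c ≤ μ) (hμv : μ < vbar) :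
    tp vbar ((μ - c)/(vbar - c)) c ∈ Fmean μ vbar := by
  have hvc : 0 < vbar - c := by linarith
  have hq0 : 0 ≤ (μ - c)/(vbar - c) := div_nonneg (by linarith) hvc.le
  have hq1 : (μ - c)/(vbar - c) ≤ 1 := (div_le_one hvc).mpr (by linarith)
  refine ⟨tp_prob _ _ _ hq0 hq1, ?_, ?_⟩
  · rw [tp_apply _ _ _ _ measurableSet_Icc,
      indicator_of_mem (show vbar ∈ Icc (0:ℝ) vbar from ⟨h0c.trans (hcμ.trans hμv.le), le_refl _⟩),
      indicator_of_mem (show c ∈ Icc (0:ℝ) vbar from ⟨h0c, hcμ.trans hμv.le⟩)]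
    simp [← ENNReal.ofReal_add hq0 (sub_nonneg.mpr hq1)]
  · rw [tp_integral _ _ _ hq0 hq1]
    have : (μ - c)/(vbar - c) * vbar + (1 - (μ - c)/(vbar - c)) * c
        = c + ((μ - c)/(vbar - c)) * (vbar - c) := by ring
    rw [this, div_mul_cancel₀ _ hvc.ne']
    linarith

lemma crBddBelow (μ vbar v1 v2 x1 : ℝ) (hv1 : 0 ≤ v1) (hv2 : 0 ≤ v2)
    (hx0 : 0 ≤ x1) (hx1 : x1 ≤ 1) :
    BddBelow (Set.range fun F : ↥(Fmean μ vbar) =>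
      (v1 * x1 * (F.1 (Icc v1 vbar)).toReal + v2 * (1 - x1) * (F.1 (Icc v2 vbar)).toReal) /
        hindsightOpt vbar F.1) := by
  refine ⟨0, forall_mem_range.mpr fun F => div_nonneg ?_
    (Real.iSup_nonneg fun p => mul_nonneg p.2.1 ENNReal.toReal_nonneg)⟩
  have h1 : (0:ℝ) ≤ 1 - x1 := by linarith
  positivity

lemma ub2 (μ vbar v1 v2 x1 : ℝ) (hμv : μ < vbar) (hv1 : 0 < v1) (h12 : v1 ≤ v2)
    (h2μ : v2 ≤ μ) (hx0 : 0 ≤ x1) (hx1 : x1 ≤ 1) (c : ℝ) (h0c : 0 < c) (hc1 : c < v1) :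
    twoLevelCRmean μ vbar v1 v2 x1 ≤
      (v1 * x1 + v2 * (1 - x1)) * ((μ - c)/(vbar - c)) /
        max c (vbar * ((μ - c)/(vbar - c))) := by
  set q := (μ - c)/(vbar - c) with hqdef
  have hcμ : c ≤ μ := by linarith
  have hvc : 0 < vbar - c := by linarith
  have hq0 : 0 ≤ q := div_nonneg (by linarith) hvc.le
  have hq1 : q ≤ 1 := (div_le_one hvc).mpr (by linarith)
  have hmem := tp_mem_Fmean μ vbar c h0c.le hcμ hμv
  have h := ciInf_le (crBddBelow μ vbar v1 v2 x1 hv1.le (hv1.le.trans h12) hx0 hx1)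
    (⟨tp vbar q c, hmem⟩ : ↥(Fmean μ vbar))
  rw [twoLevelCRmean]
  refine h.trans (le_of_eq ?_)
  rw [tp_tail_high _ _ _ hq0 hq1 _ hc1 (by linarith),
    tp_tail_high _ _ _ hq0 hq1 _ (hc1.trans_le h12) (by linarith),
    tp_opt _ _ _ hq0 hq1 h0c.le (by linarith)]
  ring_nf

lemma ub3 (μ vbar v1 v2 x1 : ℝ) (hμv : μ < vbar) (hv1 : 0 < v1) (h12 : v1 ≤ v2)
    (h2μ : v2 ≤ μ) (hx0 : 0 ≤ x1) (hx1 : x1 ≤ 1) (c : ℝ) (h1c : v1 ≤ c) (hc2 : c < v2) :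
    twoLevelCRmean μ vbar v1 v2 x1 ≤
      (v1 * x1 + v2 * (1 - x1) * ((μ - c)/(vbar - c))) /
        max c (vbar * ((μ - c)/(vbar - c))) := by
  set q := (μ - c)/(vbar - c) with hqdef
  have h0c : 0 < c := hv1.trans_le h1c
  have hcμ : c ≤ μ := by linarith
  have hvc : 0 < vbar - c := by linarith
  have hq0 : 0 ≤ q := div_nonneg (by linarith) hvc.le
  have hq1 : q ≤ 1 := (div_le_one hvc).mpr (by linarith)
  have hmem := tp_mem_Fmean μ vbar c h0c.le hcμ hμv
  have h := ciInf_le (crBddBelow μ vbar v1 v2 x1 hv1.le (hv1.le.trans h12) hx0 hx1)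
    (⟨tp vbar q c, hmem⟩ : ↥(Fmean μ vbar))
  rw [twoLevelCRmean]
  refine h.trans (le_of_eq ?_)
  rw [tp_tail_low _ _ _ hq0 hq1 _ h1c (by linarith),
    tp_tail_high _ _ _ hq0 hq1 _ hc2 (by linarith),
    tp_opt _ _ _ hq0 hq1 h0c.le (by linarith)]
  ring_nf

lemma ub2_lim (μ vbar v1 v2 x1 : ℝ) (hμv : μ < vbar) (hv1 : 0 < v1) (h12 : v1 ≤ v2)
    (h2μ : v2 ≤ μ) (hx0 : 0 ≤ x1) (hx1 : x1 ≤ 1) :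
    twoLevelCRmean μ vbar v1 v2 x1 ≤
      (v1 * x1 + v2 * (1 - x1)) * ((μ - v1)/(vbar - v1)) /
        max v1 (vbar * ((μ - v1)/(vbar - v1))) := by
  set φ : ℝ → ℝ := fun c => (v1 * x1 + v2 * (1 - x1)) * ((μ - c)/(vbar - c)) /
        max c (vbar * ((μ - c)/(vbar - c))) with hφ
  have hq : ContinuousAt (fun c : ℝ => (μ - c)/(vbar - c)) v1 :=
    ContinuousAt.div (by fun_prop) (by fun_prop) (by intro h; nlinarith)
  have hcont : ContinuousAt φ v1 := by
    apply ContinuousAt.div (continuousAt_const.mul hq)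
      (continuousAt_id.max (continuousAt_const.mul hq))
    intro h
    have : (0:ℝ) < max v1 (vbar * ((μ - v1)/(vbar - v1))) := lt_max_of_lt_left hv1
    dsimp at h
    rw [h] at this; exact lt_irrefl _ this
  apply _root_.le_of_forall_pos_le_add
  intro ε hε
  have h1 : ∀ᶠ c in nhdsWithin v1 (Set.Iio v1), φ c < φ v1 + ε :=
    (hcont.tendsto.mono_left nhdsWithin_le_nhds).eventually_lt_const (by linarith)
  have h2 : Ioo 0 v1 ∈ nhdsWithin v1 (Set.Iio v1) :=
    Ioo_mem_nhdsLT hv1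
  obtain ⟨c, hc1, hc2⟩ := (h1.and (Filter.eventually_of_mem h2 fun x hx => hx)).exists
  exact (ub2 μ vbar v1 v2 x1 hμv hv1 h12 h2μ hx0 hx1 c hc2.1 hc2.2).trans hc1.le

lemma ub3_lim (μ vbar v1 v2 x1 : ℝ) (hμv : μ < vbar) (hv1 : 0 < v1) (h12 : v1 < v2)
    (h2μ : v2 ≤ μ) (hx0 : 0 ≤ x1) (hx1 : x1 ≤ 1) :
    twoLevelCRmean μ vbar v1 v2 x1 ≤
      (v1 * x1 + v2 * (1 - x1) * ((μ - v2)/(vbar - v2))) /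
        max v2 (vbar * ((μ - v2)/(vbar - v2))) := by
  set φ : ℝ → ℝ := fun c => (v1 * x1 + v2 * (1 - x1) * ((μ - c)/(vbar - c))) /
        max c (vbar * ((μ - c)/(vbar - c))) with hφ
  have hq : ContinuousAt (fun c : ℝ => (μ - c)/(vbar - c)) v2 :=
    ContinuousAt.div (by fun_prop) (by fun_prop) (by intro h; nlinarith)
  have hcont : ContinuousAt φ v2 := by
    apply ContinuousAt.div (continuousAt_const.add (continuousAt_const.mul hq))
      (continuousAt_id.max (continuousAt_const.mul hq))
    intro h
    have : (0:ℝ) < max v2 (vbar * ((μ - v2)/(vbar - v2))) :=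
      lt_max_of_lt_left (hv1.trans h12)
    dsimp at h
    rw [h] at this; exact lt_irrefl _ this
  apply _root_.le_of_forall_pos_le_add
  intro ε hε
  have h1 : ∀ᶠ c in nhdsWithin v2 (Set.Iio v2), φ c < φ v2 + ε :=
    (hcont.tendsto.mono_left nhdsWithin_le_nhds).eventually_lt_const (by linarith)
  have h2 : Ioo v1 v2 ∈ nhdsWithin v2 (Set.Iio v2) :=
    Ioo_mem_nhdsLT h12
  obtain ⟨c, hc1, hc2⟩ := (h1.and (Filter.eventually_of_mem h2 fun x hx => hx)).exists
  exact (ub3 μ vbar v1 v2 x1 hμv hv1 h12.le h2μ hx0 hx1 c hc2.1.le hc2.2).trans hc1.le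

lemma minAB_eq (μ vbar v1 v2 x1 : ℝ) (hμv : μ < vbar) (hv1 : 0 < v1) (h12 : v1 ≤ v2)
    (h2μ : v2 ≤ μ) (hx0 : 0 ≤ x1) (hx1 : x1 ≤ 1) :
    (v1 * x1 + v2 * (1 - x1)) * ((μ - v1)/(vbar - v1)) /
        max v1 (vbar * ((μ - v1)/(vbar - v1)))
      = min ((v1 * x1 + v2 * (1 - x1)) / vbar)
          ((μ - v1) * (v1 * x1 + v2 * (1 - x1)) / (v1 * (vbar - v1))) := by
  have hvb : (0:ℝ) < vbar := by linarith
  have hv1b : (0:ℝ) < vbar - v1 := by linarith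
  set S := v1 * x1 + v2 * (1 - x1) with hSdef
  set q := (μ - v1)/(vbar - v1) with hqdef
  have hS : 0 ≤ S := by nlinarith
  have hq0 : 0 ≤ q := div_nonneg (by linarith) hv1b.le
  have hBeq : (μ - v1) * S / (v1 * (vbar - v1)) = S * q / v1 := by
    rw [hqdef]; field_simp
  rcases eq_or_lt_of_le (h12.trans h2μ) with h | h
  · have hq : q = 0 := by rw [hqdef, ← h]; simp
    rw [hq, mul_zero, zero_div, ← h, sub_self, zero_mul, zero_div]
    rw [min_eq_right (div_nonneg hS hvb.le)]
  · have hqpos : 0 < q := div_pos (by linarith) hv1b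
    rcases le_total (vbar * q) v1 with hm | hm
    · rw [max_eq_left hm]
      have hle : (μ - v1) * S / (v1 * (vbar - v1)) ≤ S / vbar := by
        rw [hBeq, div_le_div_iff₀ hv1 hvb]
        nlinarith [mul_le_mul_of_nonneg_left hm hS]
      rw [min_eq_right hle, hBeq]
    · rw [max_eq_right hm]
      have hA : S * q / (vbar * q) = S / vbar := by
        rw [mul_comm vbar q, mul_comm S q, mul_div_mul_left _ _ hqpos.ne']
      have hle : S / vbar ≤ (μ - v1) * S / (v1 * (vbar - v1)) := by
        rw [hBeq, div_le_div_iff₀ hvb hv1]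
        nlinarith [mul_le_mul_of_nonneg_left hm hS]
      rw [hA, min_eq_left hle]

lemma ub_final (μ vbar v1 v2 x1 : ℝ) (hμ : 0 < μ) (hμv : μ < vbar) (hv1 : 0 < v1)
    (h12 : v1 ≤ v2) (h2μ : v2 ≤ μ) (hx0 : 0 ≤ x1) (hx1 : x1 ≤ 1) :
    twoLevelCRmean μ vbar v1 v2 x1 ≤
      min (min ((v1 * x1 + v2 * (1 - x1)) / vbar)
              ((μ - v1) * (v1 * x1 + v2 * (1 - x1)) / (v1 * (vbar - v1))))
          ((μ - v2) * (1 - x1) / (vbar - v2) + v1 * x1 / v2) := by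
  have hvb : (0:ℝ) < vbar := by linarith
  have hv2 : (0:ℝ) < v2 := hv1.trans_le h12
  have hv2b : (0:ℝ) < vbar - v2 := by linarith
  have hAB := (ub2_lim μ vbar v1 v2 x1 hμv hv1 h12 h2μ hx0 hx1).trans_eq
    (minAB_eq μ vbar v1 v2 x1 hμv hv1 h12 h2μ hx0 hx1)
  refine le_min hAB ?_
  set r := (μ - v2)/(vbar - v2) with hrdef
  have hr0 : 0 ≤ r := div_nonneg (by linarith) hv2b.le
  rcases eq_or_lt_of_le h12 with h | h
  · -- v1 = v2 : C ≥ B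
    refine hAB.trans ((min_le_right _ _).trans ?_)
    subst h
    rw [div_add_div _ _ hv2b.ne' hv1.ne', div_le_div_iff₀ (by positivity) (by positivity)]
    nlinarith [mul_nonneg (mul_nonneg hx0 (sub_nonneg.mpr hμv.le))
      (mul_pos (mul_pos hv1 hv1) hv2b).le]
  · rcases le_total (vbar * r) v2 with hm | hm
    · -- C achieved by family 3
      have h3 := ub3_lim μ vbar v1 v2 x1 hμv hv1 h h2μ hx0 hx1
      rw [max_eq_left hm] at h3
      refine h3.trans (le_of_eq ?_)
      field_simp
      ring
    · -- vbar * r ≥ v2 : C ≥ A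
      refine hAB.trans ((min_le_left _ _).trans ?_)
      have h1 : v1 * x1 / vbar ≤ v1 * x1 / v2 :=
        div_le_div_of_nonneg_left (by positivity) hv2 (by linarith)
      have h2 : v2 * (1 - x1) / vbar ≤ (μ - v2) * (1 - x1) / (vbar - v2) := by
        rw [div_le_div_iff₀ hvb hv2b]
        have hkey : v2 * (vbar - v2) ≤ vbar * (μ - v2) := by
          rw [hrdef, ← mul_div_assoc, le_div_iff₀ hv2b] at hm
          exact hm
        nlinarith [mul_le_mul_of_nonneg_right hkey (sub_nonneg.mpr hx1)]
      calc (v1 * x1 + v2 * (1 - x1)) / vbar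
          = v1 * x1 / vbar + v2 * (1 - x1) / vbar := by ring
        _ ≤ (μ - v2) * (1 - x1) / (vbar - v2) + v1 * x1 / v2 := by linarith

lemma key2 (μ vbar v1 v2 x1 m G1 G2 : ℝ)
    (hμv : μ < vbar) (hv1 : 0 < v1) (h12 : v1 ≤ v2) (h2μ : v2 ≤ μ)
    (hx0 : 0 ≤ x1) (hx1 : x1 ≤ 1) (hm0 : 0 ≤ m)
    (hG20 : 0 ≤ G2) (hG21 : G2 ≤ G1) (hG11 : G1 ≤ 1)
    (hmean : μ ≤ v1*(1-G1) + v2*(G1-G2) + vbar*G2)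
    (hA' : m * vbar ≤ v1*x1 + v2*(1-x1))
    (hC' : m * (v2*(vbar-v2)) ≤ (μ-v2)*(1-x1)*v2 + v1*x1*(vbar-v2)) :
    m * (v2*G1) ≤ v1*x1*G1 + v2*(1-x1)*G2 := by
  have hvbμ : 0 < vbar - μ := by linarith
  have hvb2 : 0 < vbar - v2 := by linarith
  have hd : 0 ≤ (vbar-v1)*G1 - (μ-v1) := by
    nlinarith [mul_nonneg hvb2.le (sub_nonneg.mpr hG21)]
  have hSm : 0 ≤ (v1*x1 + v2*(1-x1)) - m*v2 := by
    nlinarith [mul_nonneg hm0 hvb2.le]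
  have h1 : 0 ≤ (1-G1)*((μ-v1)*((vbar-v2)*((v1*x1+v2*(1-x1)) - m*v2))) :=
    mul_nonneg (by linarith) (mul_nonneg (by linarith) (mul_nonneg hvb2.le hSm))
  have h2 : 0 ≤ ((vbar-v1)*G1-(μ-v1)) *
      ((vbar-v2)*v1*x1 + v2*(1-x1)*(μ-v2) - m*(v2*(vbar-v2))) :=
    mul_nonneg hd (by nlinarith [hC'])
  have h3 : 0 ≤ ((vbar-μ)*(v2*(1-x1)))*((vbar-v2)*G2-(μ-v1)+(v2-v1)*G1) :=
    mul_nonneg (mul_nonneg hvbμ.le (mul_nonneg (by linarith) (by linarith)))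
      (by linarith)
  have key : (vbar-μ)*(vbar-v2)*((v1*x1*G1+v2*(1-x1)*G2) - m*(v2*G1)) =
      (1-G1)*((μ-v1)*((vbar-v2)*((v1*x1+v2*(1-x1)) - m*v2)))
      + ((vbar-v1)*G1-(μ-v1)) *
        ((vbar-v2)*v1*x1 + v2*(1-x1)*(μ-v2) - m*(v2*(vbar-v2)))
      + ((vbar-μ)*(v2*(1-x1)))*((vbar-v2)*G2-(μ-v1)+(v2-v1)*G1) := by ring
  nlinarith [key, h1, h2, h3, mul_pos hvbμ hvb2]

lemma key3 (μ vbar v1 v2 x1 m G1 G2 : ℝ)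
    (hμv : μ < vbar) (hv1 : 0 < v1) (h12 : v1 ≤ v2) (h2μ : v2 ≤ μ)
    (hx0 : 0 ≤ x1) (hx1 : x1 ≤ 1) (hm0 : 0 ≤ m)
    (hG20 : 0 ≤ G2) (hG21 : G2 ≤ G1) (hG11 : G1 ≤ 1)
    (hmean : μ ≤ v1*(1-G1) + v2*(G1-G2) + vbar*G2)
    (hB' : m * (v1*(vbar-v1)) ≤ (μ-v1)*(v1*x1 + v2*(1-x1)))
    (hC' : m * (v2*(vbar-v2)) ≤ (μ-v2)*(1-x1)*v2 + v1*x1*(vbar-v2)) :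
    m * v1 ≤ v1*x1*G1 + v2*(1-x1)*G2 := by
  have hvbμ : 0 < vbar - μ := by linarith
  have hvb2 : 0 < vbar - v2 := by linarith
  have hd : 0 ≤ (vbar-v1)*G1 - (μ-v1) := by
    nlinarith [mul_nonneg hvb2.le (sub_nonneg.mpr hG21)]
  have hs1 : 0 ≤ (1-G1)*((vbar-v2)*((μ-v1)*(v1*x1+v2*(1-x1)) - m*(v1*(vbar-v1)))) :=
    mul_nonneg (by linarith) (mul_nonneg hvb2.le (by linarith))
  have hs2 : 0 ≤ ((vbar-v1)*G1-(μ-v1)) *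
      ((vbar-v2)*v1*x1 + v2*(1-x1)*(μ-v2) - m*(v1*(vbar-v2))) := by
    refine mul_nonneg hd ?_
    have : m*(v1*(vbar-v2)) ≤ m*(v2*(vbar-v2)) :=
      mul_le_mul_of_nonneg_left (mul_le_mul_of_nonneg_right h12 hvb2.le) hm0
    nlinarith [hC']
  have hs3 : 0 ≤ ((vbar-μ)*(v2*(1-x1)))*((vbar-v2)*G2-(μ-v1)+(v2-v1)*G1) :=
    mul_nonneg (mul_nonneg hvbμ.le (mul_nonneg (by linarith) (by linarith)))
      (by linarith)
  have key : (vbar-μ)*(vbar-v2)*((v1*x1*G1+v2*(1-x1)*G2) - m*v1) =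
      (1-G1)*((vbar-v2)*((μ-v1)*(v1*x1+v2*(1-x1)) - m*(v1*(vbar-v1))))
      + ((vbar-v1)*G1-(μ-v1)) *
        ((vbar-v2)*v1*x1 + v2*(1-x1)*(μ-v2) - m*(v1*(vbar-v2)))
      + ((vbar-μ)*(v2*(1-x1)))*((vbar-v2)*G2-(μ-v1)+(v2-v1)*G1) := by ring
  nlinarith [key, hs1, hs2, hs3, mul_pos hvbμ hvb2]

lemma mean_bound (μ vbar v1 v2 : ℝ) (h0v : 0 ≤ v1) (h12 : v1 ≤ v2) (h2v : v2 ≤ vbar)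
    (F : Measure ℝ) (hP : IsProbabilityMeasure F) (hsupp : F (Icc (0:ℝ) vbar) = 1)
    (hmean : μ ≤ ∫ t, t ∂F) :
    μ ≤ v1*(1 - (F (Icc v1 vbar)).toReal)
        + v2*((F (Icc v1 vbar)).toReal - (F (Icc v2 vbar)).toReal)
        + vbar*(F (Icc v2 vbar)).toReal := by
  have hvb0 : (0:ℝ) ≤ vbar := le_trans (le_trans h0v h12) h2v
  have hcompl : F (Icc (0:ℝ) vbar)ᶜ = 0 := by
    have h := measure_compl (μ := F) (s := Icc (0:ℝ) vbar) measurableSet_Icc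
      (measure_ne_top F _)
    rw [hsupp, measure_univ, tsub_self] at h
    exact h
  have hae : ∀ᵐ t ∂F, t ∈ Icc (0:ℝ) vbar := by
    rw [ae_iff]
    convert hcompl using 2
    rfl
  have hint : Integrable (fun t : ℝ => t) F := by
    refine (integrable_const vbar).mono' aestronglyMeasurable_id ?_
    filter_upwards [hae] with t ht
    rw [Real.norm_eq_abs, abs_le]
    exact ⟨by linarith [ht.1], ht.2⟩
  -- reduce to the integral over [0, vbar]
  have hsplit : ∫ t, t ∂F = ∫ t in Icc (0:ℝ) vbar, t ∂F := by
    rw [← integral_add_compl measurableSet_Icc hint,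
      Measure.restrict_eq_zero.mpr hcompl, integral_zero_measure, add_zero]
  -- decompose the interval
  have hdisj1 : Disjoint (Ico (0:ℝ) v1) (Icc v1 vbar) := by
    rw [Set.disjoint_left]; rintro a ⟨_, h⟩ ⟨h', _⟩; exact absurd h' (not_le.mpr h)
  have hdisj2 : Disjoint (Ico v1 v2) (Icc v2 vbar) := by
    rw [Set.disjoint_left]; rintro a ⟨_, h⟩ ⟨h', _⟩; exact absurd h' (not_le.mpr h)
  have hu1 : Ico (0:ℝ) v1 ∪ Icc v1 vbar = Icc (0:ℝ) vbar :=
    Ico_union_Icc_eq_Icc h0v (le_trans h12 h2v)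
  have hu2 : Ico v1 v2 ∪ Icc v2 vbar = Icc v1 vbar := Ico_union_Icc_eq_Icc h12 h2v
  have hsplit2 : ∫ t in Icc (0:ℝ) vbar, t ∂F
      = ∫ t in Ico (0:ℝ) v1, t ∂F + ∫ t in Ico v1 v2, t ∂F
        + ∫ t in Icc v2 vbar, t ∂F := by
    rw [← hu1, setIntegral_union hdisj1 measurableSet_Icc hint.integrableOn
      hint.integrableOn, ← hu2, setIntegral_union hdisj2 measurableSet_Icc
      hint.integrableOn hint.integrableOn]
    ring
  -- bound each piece
  have hb : ∀ (a b c : ℝ), (∀ x ∈ Set.Ico a b, x ≤ c) →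
      ∫ t in Ico a b, t ∂F ≤ c * (F (Ico a b)).toReal := by
    intro a b c hc
    have := setIntegral_mono_on hint.integrableOn
      (integrableOn_const (measure_ne_top F _)) measurableSet_Ico hc
    rwa [setIntegral_const, smul_eq_mul, mul_comm] at this
  have hb3 : ∫ t in Icc v2 vbar, t ∂F ≤ vbar * (F (Icc v2 vbar)).toReal := by
    have := setIntegral_mono_on hint.integrableOn
      (integrableOn_const (measure_ne_top F _)) measurableSet_Icc
      (fun x hx => hx.2 : ∀ x ∈ Set.Icc v2 vbar, x ≤ vbar)
    rwa [setIntegral_const, smul_eq_mul, mul_comm] at this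
  -- measure arithmetic
  have harith : ∀ (s t : Set ℝ), Disjoint s t → MeasurableSet t → ∀ u, s ∪ t = u →
      (F s).toReal = (F u).toReal - (F t).toReal := by
    intro s t hst ht u hu
    have := measure_union (μ := F) hst ht
    rw [hu] at this
    rw [this, ENNReal.toReal_add (measure_ne_top F _) (measure_ne_top F _)]
    ring
  have hm1 : (F (Ico (0:ℝ) v1)).toReal = 1 - (F (Icc v1 vbar)).toReal := by
    rw [harith _ _ hdisj1 measurableSet_Icc _ hu1, hsupp, ENNReal.toReal_one]
  have hm2 : (F (Ico v1 v2)).toReal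
      = (F (Icc v1 vbar)).toReal - (F (Icc v2 vbar)).toReal :=
    harith _ _ hdisj2 measurableSet_Icc _ hu2
  have h1 := hb 0 v1 v1 (fun x hx => hx.2.le)
  have h2 := hb v1 v2 v2 (fun x hx => hx.2.le)
  rw [hm1] at h1
  rw [hm2] at h2
  calc μ ≤ ∫ t, t ∂F := hmean
    _ = _ := hsplit.trans hsplit2
    _ ≤ _ := by linarith

lemma lb_final (μ vbar v1 v2 x1 : ℝ) (hμ : 0 < μ) (hμv : μ < vbar) (hv1 : 0 < v1)
    (h12 : v1 ≤ v2) (h2μ : v2 ≤ μ) (hx0 : 0 ≤ x1) (hx1 : x1 ≤ 1)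
    (F : Measure ℝ) (hF : F ∈ Fmean μ vbar) :
    min (min ((v1 * x1 + v2 * (1 - x1)) / vbar)
            ((μ - v1) * (v1 * x1 + v2 * (1 - x1)) / (v1 * (vbar - v1))))
        ((μ - v2) * (1 - x1) / (vbar - v2) + v1 * x1 / v2) ≤
      (v1 * x1 * (F (Icc v1 vbar)).toReal + v2 * (1 - x1) * (F (Icc v2 vbar)).toReal) /
        hindsightOpt vbar F := by
  obtain ⟨hP, hsupp, hmeanF⟩ := hF
  have hvb : (0:ℝ) < vbar := hμ.trans hμv
  have hv2 : (0:ℝ) < v2 := hv1.trans_le h12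
  have hv1b : (0:ℝ) < vbar - v1 := by linarith
  have hv2b : (0:ℝ) < vbar - v2 := by linarith
  have hx1' : (0:ℝ) ≤ 1 - x1 := by linarith
  set G1 := (F (Icc v1 vbar)).toReal with hG1def
  set G2 := (F (Icc v2 vbar)).toReal with hG2def
  have hS0 : 0 ≤ v1 * x1 + v2 * (1 - x1) := by positivity
  set m := min (min ((v1 * x1 + v2 * (1 - x1)) / vbar)
            ((μ - v1) * (v1 * x1 + v2 * (1 - x1)) / (v1 * (vbar - v1))))
        ((μ - v2) * (1 - x1) / (vbar - v2) + v1 * x1 / v2) with hmdef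
  have hmA : m ≤ (v1 * x1 + v2 * (1 - x1)) / vbar :=
    le_trans (min_le_left _ _) (min_le_left _ _)
  have hmB : m ≤ (μ - v1) * (v1 * x1 + v2 * (1 - x1)) / (v1 * (vbar - v1)) :=
    le_trans (min_le_left _ _) (min_le_right _ _)
  have hmC : m ≤ (μ - v2) * (1 - x1) / (vbar - v2) + v1 * x1 / v2 := min_le_right _ _
  have hm0 : 0 ≤ m := by
    refine le_min (le_min (div_nonneg hS0 hvb.le)
      (div_nonneg (mul_nonneg (by linarith) hS0) (by positivity))) ?_
    exact add_nonneg (div_nonneg (mul_nonneg (by linarith) hx1') hv2b.le)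
      (div_nonneg (mul_nonneg hv1.le hx0) hv2.le)
  have hoptnn : 0 ≤ hindsightOpt vbar F :=
    Real.iSup_nonneg fun p => mul_nonneg p.2.1 ENNReal.toReal_nonneg
  have hnum0 : 0 ≤ v1 * x1 * G1 + v2 * (1 - x1) * G2 :=
    add_nonneg (mul_nonneg (mul_nonneg hv1.le hx0) ENNReal.toReal_nonneg)
      (mul_nonneg (mul_nonneg hv2.le hx1') ENNReal.toReal_nonneg)
  -- basic G facts
  have htoReal_le_one : ∀ s : Set ℝ, (F s).toReal ≤ 1 := fun s => by
    have h := prob_le_one (μ := F) (s := s)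
    calc (F s).toReal ≤ (1 : ℝ≥0∞).toReal := ENNReal.toReal_mono ENNReal.one_ne_top h
      _ = 1 := ENNReal.toReal_one
  have hG11 : G1 ≤ 1 := htoReal_le_one _
  have hG20 : 0 ≤ G2 := ENNReal.toReal_nonneg
  have hG21 : G2 ≤ G1 :=
    ENNReal.toReal_mono (measure_ne_top F _) (measure_mono (Icc_subset_Icc_left h12))
  have hmean : μ ≤ v1*(1-G1) + v2*(G1-G2) + vbar*G2 :=
    mean_bound μ vbar v1 v2 hv1.le h12 (by linarith) F hP hsupp hmeanF
  -- OPT upper bound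
  haveI : Nonempty (Icc (0:ℝ) vbar) := (Set.nonempty_Icc.mpr hvb.le).to_subtype
  have hub : ∀ p : Icc (0:ℝ) vbar,
      (p : ℝ) * (F (Icc (p : ℝ) vbar)).toReal ≤ max v1 (max (v2 * G1) (vbar * G2)) := by
    rintro ⟨p, hp0, hpv⟩
    rcases lt_or_ge p v1 with h | h
    · refine le_max_of_le_left ?_
      calc p * (F (Icc p vbar)).toReal ≤ p * 1 :=
            mul_le_mul_of_nonneg_left (htoReal_le_one _) hp0
        _ ≤ v1 := by linarith
    · rcases lt_or_ge p v2 with h' | h'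
      · refine le_max_of_le_right (le_max_of_le_left ?_)
        exact mul_le_mul h'.le
          (ENNReal.toReal_mono (measure_ne_top F _)
            (measure_mono (Icc_subset_Icc_left h))) ENNReal.toReal_nonneg hv2.le
      · refine le_max_of_le_right (le_max_of_le_right ?_)
        exact mul_le_mul hpv
          (ENNReal.toReal_mono (measure_ne_top F _)
            (measure_mono (Icc_subset_Icc_left h'))) ENNReal.toReal_nonneg hvb.le
  have hopt_le : hindsightOpt vbar F ≤ max v1 (max (v2 * G1) (vbar * G2)) := ciSup_le hub
  have hopt_ge : v1 * G1 ≤ hindsightOpt vbar F :=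
    le_ciSup ⟨_, forall_mem_range.mpr hub⟩ (⟨v1, hv1.le, by linarith⟩ : Icc (0:ℝ) vbar)
  rcases eq_or_lt_of_le (h12.trans h2μ) with hcase | hcase
  · -- v1 = v2 = μ : the min is 0
    have hB0 : (μ - v1) * (v1 * x1 + v2 * (1 - x1)) / (v1 * (vbar - v1)) = 0 := by
      rw [← hcase, sub_self, zero_mul, zero_div]
    exact le_trans (hB0 ▸ hmB) (div_nonneg hnum0 hoptnn)
  · -- v1 < μ : OPT > 0
    have hG1pos : 0 < G1 := by
      rcases lt_or_ge 0 G1 with h | h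
      · exact h
      · exfalso
        have hG10 : G1 = 0 := le_antisymm h ENNReal.toReal_nonneg
        have hG20' : G2 = 0 := le_antisymm (hG10 ▸ hG21) hG20
        rw [hG10, hG20'] at hmean
        simp only [sub_zero, mul_zero, sub_self] at hmean
        linarith
    have hV : 0 < hindsightOpt vbar F := lt_of_lt_of_le (by positivity) hopt_ge
    rw [le_div_iff₀ hV]
    -- cleared forms of the three bounds on m
    have hA' : m * vbar ≤ v1*x1 + v2*(1-x1) := (le_div_iff₀ hvb).mp hmA
    have hB' : m * (v1*(vbar-v1)) ≤ (μ-v1)*(v1*x1 + v2*(1-x1)) :=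
      (le_div_iff₀ (by positivity)).mp hmB
    have hC' : m * (v2*(vbar-v2)) ≤ (μ-v2)*(1-x1)*v2 + v1*x1*(vbar-v2) := by
      have h := mul_le_mul_of_nonneg_right hmC (by positivity : (0:ℝ) ≤ v2*(vbar-v2))
      have hne1 : v2 ≠ 0 := hv2.ne'
      have hne2 : vbar - v2 ≠ 0 := hv2b.ne'
      have hid : ((μ - v2) * (1 - x1) / (vbar - v2) + v1 * x1 / v2) * (v2*(vbar-v2))
          = (μ-v2)*(1-x1)*v2 + v1*x1*(vbar-v2) := by
        field_simp
      rw [hid] at h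
      exact h
    have hmean' := hmean
    have hI1 : m * (vbar * G2) ≤ v1*x1*G1 + v2*(1-x1)*G2 := by
      nlinarith [mul_le_mul_of_nonneg_right hA' hG20,
        mul_nonneg (mul_nonneg hv1.le hx0) (sub_nonneg.mpr hG21)]
    have hI2 := key2 μ vbar v1 v2 x1 m G1 G2 hμv hv1 h12 h2μ hx0 hx1 hm0
      hG20 hG21 hG11 hmean' hA' hC'
    have hI3 := key3 μ vbar v1 v2 x1 m G1 G2 hμv hv1 h12 h2μ hx0 hx1 hm0
      hG20 hG21 hG11 hmean' hB' hC'
    calc m * hindsightOpt vbar F ≤ m * max v1 (max (v2 * G1) (vbar * G2)) :=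
          mul_le_mul_of_nonneg_left hopt_le hm0
      _ = max (m * v1) (max (m * (v2 * G1)) (m * (vbar * G2))) := by
          rw [mul_max_of_nonneg _ _ hm0, mul_max_of_nonneg _ _ hm0]
      _ ≤ v1 * x1 * G1 + v2 * (1 - x1) * G2 := max_le hI3 (max_le hI2 hI1)

/-- For `0 < v₁ ≤ v₂ ≤ μ` and `x₁ ∈ [0,1]`, the competitive ratio of the 2-level mechanism
over the mean ambiguity set equals the minimum of the three displayed quantities. -/
theorem stmt8 (μ vbar : ℝ) (hμ : 0 < μ) (hμv : μ < vbar)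
    (v1 v2 x1 : ℝ) (hv1 : 0 < v1) (h12 : v1 ≤ v2) (h2μ : v2 ≤ μ)
    (hx0 : 0 ≤ x1) (hx1 : x1 ≤ 1) :
    twoLevelCRmean μ vbar v1 v2 x1 =
      min (min ((v1 * x1 + v2 * (1 - x1)) / vbar)
              ((μ - v1) * (v1 * x1 + v2 * (1 - x1)) / (v1 * (vbar - v1))))
          ((μ - v2) * (1 - x1) / (vbar - v2) + v1 * x1 / v2) := by
  apply le_antisymm
  · exact ub_final μ vbar v1 v2 x1 hμ hμv hv1 h12 h2μ hx0 hx1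
  · haveI : Nonempty ↥(Fmean μ vbar) :=
      ⟨⟨tp vbar ((μ - 0)/(vbar - 0)) 0, tp_mem_Fmean μ vbar 0 le_rfl hμ.le hμv⟩⟩
    rw [twoLevelCRmean]
    exact le_ciInf fun F => lb_final μ vbar v1 v2 x1 hμ hμv hv1 h12 h2μ hx0 hx1 F.1 F.2
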